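/- Linear convergence of the generalized Sinkhorn algorithm: assume the set of nonnegative arrays 𝐏 satisfying all signed marginal constraints Σ_{k : k_ℓ = j} X_k 𝐏_k = p^{(ℓ)}_j contains a strictly positive array, and let g* denote the (attained) maximum of the dual functional g(λ) = −Σ_k 𝐐_k · exp(−X_k · Σ_ℓ λ^{(ℓ)}_{k_ℓ}) − Σ_ℓ Σ_j λ^{(ℓ)}_j · p^{(ℓ)}_j. Define the iteration in which one sweep updates, cyclically in a fixed order over all coordinates (ℓ, j), the variable λ^{(ℓ)}_j to the unique maximizer of g with all other coordinates held fixed (equivalently, sets e^{−λ^{(ℓ)}_j} = G(S⁺_{ℓ,j}, S⁻_{ℓ,j}, p^{(ℓ)}_j) where S⁺_{ℓ,j}, S⁻_{ℓ,j} are the positive- and negative-sign partial sums of the currently scaled prior). Then the sequence λ^{(t)} of iterates produced from any starting point converges at a linear rate in dual value: there exist constants C ≥ 0 and ρ ∈ [0, 1) such that g* − g(λ^{(t)}) ≤ C·ρ^{t} for all t. -/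

import Mathlib

open scoped BigOperators

noncomputable section

/-- The generalized Sinkhorn scaling factor `G(S⁺, S⁻, p)`, the unique positive root of
`S⁺·α² − p·α − S⁻ = 0`. -/
def GSink (Sp Sm p : ℝ) : ℝ := (p + Real.sqrt (p ^ 2 + 4 * Sp * Sm)) / (2 * Sp)

variable {n : ℕ} {I : Fin n → Type}

/-- The dual functional `g(λ)` of the signed Schrödinger problem, with the dual
variables `λ^{(ℓ)}_j` indexed by coordinates `⟨ℓ, j⟩ : Σ ℓ, I ℓ`. -/
def dualG [∀ ℓ, Fintype (I ℓ)] (Q X : (∀ ℓ, I ℓ) → ℝ) (p : ∀ ℓ, I ℓ → ℝ)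
    (lam : (Σ ℓ : Fin n, I ℓ) → ℝ) : ℝ :=
  -(∑ k : ∀ ℓ, I ℓ, Q k * Real.exp (-(X k) * ∑ ℓ, lam ⟨ℓ, k ℓ⟩))
    - ∑ ℓ, ∑ j, lam ⟨ℓ, j⟩ * p ℓ j

/-- The positive-sign partial sum `S⁺_{ℓ,j}` of the currently scaled prior, where the
current scalings are `α^{(m)}_i = e^{−λ^{(m)}_i}`, so that
`Π_{m ≠ ℓ} α^{(m)}_{k_m} = exp(−Σ_{m ≠ ℓ} λ^{(m)}_{k_m})`. -/
def Splus [∀ ℓ, Fintype (I ℓ)] [∀ ℓ, DecidableEq (I ℓ)]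
    (Q X : (∀ ℓ, I ℓ) → ℝ) (lam : (Σ ℓ : Fin n, I ℓ) → ℝ)
    (ℓ : Fin n) (j : I ℓ) : ℝ :=
  ∑ k : ∀ m, I m, if k ℓ = j ∧ X k = 1 then
    Q k * Real.exp (-∑ m ∈ Finset.univ.erase ℓ, lam ⟨m, k m⟩) else 0

/-- The negative-sign partial sum `S⁻_{ℓ,j}` of the currently scaled prior, involving
`Π_{m ≠ ℓ} (α^{(m)}_{k_m})⁻¹ = exp(Σ_{m ≠ ℓ} λ^{(m)}_{k_m})`. -/
def Sminus [∀ ℓ, Fintype (I ℓ)] [∀ ℓ, DecidableEq (I ℓ)]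
    (Q X : (∀ ℓ, I ℓ) → ℝ) (lam : (Σ ℓ : Fin n, I ℓ) → ℝ)
    (ℓ : Fin n) (j : I ℓ) : ℝ :=
  ∑ k : ∀ m, I m, if k ℓ = j ∧ X k = -1 then
    Q k * Real.exp (∑ m ∈ Finset.univ.erase ℓ, lam ⟨m, k m⟩) else 0

/-- One coordinate update of the generalized Sinkhorn algorithm: the dual variable at
coordinate `c = ⟨ℓ, j⟩` is set so that `e^{−λ^{(ℓ)}_j} = G(S⁺_{ℓ,j}, S⁻_{ℓ,j}, p^{(ℓ)}_j)`,
i.e. `λ^{(ℓ)}_j = −log G(S⁺_{ℓ,j}, S⁻_{ℓ,j}, p^{(ℓ)}_j)`; this is the unique maximizer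
of the dual functional in that coordinate, with all other coordinates held fixed. -/
def gsUpdate [∀ ℓ, Fintype (I ℓ)] [∀ ℓ, DecidableEq (I ℓ)]
    (Q X : (∀ ℓ, I ℓ) → ℝ) (p : ∀ ℓ, I ℓ → ℝ)
    (lam : (Σ ℓ : Fin n, I ℓ) → ℝ) (c : Σ ℓ : Fin n, I ℓ) :
    (Σ ℓ : Fin n, I ℓ) → ℝ :=
  Function.update lam c
    (-Real.log (GSink (Splus Q X lam c.1 c.2) (Sminus Q X lam c.1 c.2) (p c.1 c.2)))

/-- One sweep of the generalized Sinkhorn algorithm: the coordinates are updated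
cyclically in the fixed order given by the list `ord`. -/
def gsSweep [∀ ℓ, Fintype (I ℓ)] [∀ ℓ, DecidableEq (I ℓ)]
    (Q X : (∀ ℓ, I ℓ) → ℝ) (p : ∀ ℓ, I ℓ → ℝ)
    (ord : List (Σ ℓ : Fin n, I ℓ)) (lam : (Σ ℓ : Fin n, I ℓ) → ℝ) :
    (Σ ℓ : Fin n, I ℓ) → ℝ :=
  ord.foldl (fun l c => gsUpdate Q X p l c) lam


private lemma sk_quadA {s : ℝ} (hs : 0 ≤ s) : 1 + s + s ^ 2 / 2 ≤ Real.exp s := by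
  have h := Real.sum_le_exp_of_nonneg hs 3
  simp [Finset.sum_range_succ] at h
  nlinarith [h]

private lemma sk_quadB {s : ℝ} (hs : 0 ≤ s) : s ^ 2 / 4 ≤ (s - 1) * Real.exp s + 1 := by
  rcases le_total 1 s with h1 | h1
  · nlinarith [sk_quadA hs, Real.exp_pos s]
  · have hb := Real.exp_bound (x := s) (by rw [abs_of_nonneg hs]; exact h1) (n := 3) (by norm_num)
    rw [abs_of_nonneg hs] at hb
    simp [Finset.sum_range_succ, Nat.factorial] at hb
    have hub : Real.exp s ≤ 1 + s + s ^ 2 / 2 + (2/9) * s ^ 3 := by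
      have h2 := (abs_le.1 hb).2
      nlinarith [h2]
    nlinarith [mul_le_mul_of_nonneg_left hub (by linarith : (0:ℝ) ≤ 1 - s), sq_nonneg s,
      pow_le_pow_left₀ hs h1 3, sq_nonneg (s*s)]

private lemma sk_L1core {M a b : ℝ} (ha : a ≤ M) (hb : b ≤ M) :
    Real.exp (-M) * (a - b) ^ 2 / 4 ≤ Real.exp (-a) - Real.exp (-b) + Real.exp (-b) * (a - b) := by
  rcases le_total a b with h | h
  · set t := b - a with ht
    have hexp : Real.exp (-a) = Real.exp (-b) * Real.exp t := by
      rw [← Real.exp_add, ht]; ring_nf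
    have h1 : 1 + t + t ^ 2 / 2 ≤ Real.exp t := sk_quadA (by linarith)
    have h2 : Real.exp (-M) ≤ Real.exp (-b) := Real.exp_le_exp.mpr (by linarith)
    have h3 : (0:ℝ) < Real.exp (-b) := Real.exp_pos _
    rw [hexp]
    nlinarith [sq_nonneg t, mul_le_mul_of_nonneg_left h1 h3.le]
  · set r := a - b with hr
    have hexp : Real.exp (-b) = Real.exp (-a) * Real.exp r := by
      rw [← Real.exp_add, hr]; ring_nf
    have h1 : r ^ 2 / 4 ≤ (r - 1) * Real.exp r + 1 := sk_quadB (by linarith)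
    have h2 : Real.exp (-M) ≤ Real.exp (-a) := Real.exp_le_exp.mpr (by linarith)
    have h3 : (0:ℝ) < Real.exp (-a) := Real.exp_pos _
    rw [hexp]
    nlinarith [mul_le_mul_of_nonneg_left h1 h3.le, sq_nonneg r]

private lemma sk_L3core {m a b : ℝ} (ha : m ≤ a) (hb : m ≤ b) :
    |Real.exp (-a) - Real.exp (-b)| ≤ Real.exp (-m) * |a - b| := by
  rcases le_total a b with h | h
  · have hexp : Real.exp (-b) = Real.exp (-a) * Real.exp (a - b) := by
      rw [← Real.exp_add]; ring_nf
    have h1 : (a - b) + 1 ≤ Real.exp (a - b) := Real.add_one_le_exp _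
    have h2 : Real.exp (-a) ≤ Real.exp (-m) := Real.exp_le_exp.mpr (by linarith)
    have h3 : (0:ℝ) < Real.exp (-a) := Real.exp_pos _
    have h4 : Real.exp (-a) - Real.exp (-b) ≤ Real.exp (-a) * (b - a) := by
      rw [hexp]; nlinarith
    have h5 : 0 ≤ Real.exp (-a) - Real.exp (-b) := by
      have he1 : Real.exp (a - b) ≤ 1 := Real.exp_le_one_iff.mpr (by linarith)
      rw [hexp]; nlinarith
    rw [abs_of_nonneg h5, abs_of_nonpos (by linarith : a - b ≤ 0)]
    nlinarith [mul_le_mul_of_nonneg_right h2 (by linarith : (0:ℝ) ≤ b - a)]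
  · have hexp : Real.exp (-a) = Real.exp (-b) * Real.exp (b - a) := by
      rw [← Real.exp_add]; ring_nf
    have h1 : (b - a) + 1 ≤ Real.exp (b - a) := Real.add_one_le_exp _
    have h2 : Real.exp (-b) ≤ Real.exp (-m) := Real.exp_le_exp.mpr (by linarith)
    have h3 : (0:ℝ) < Real.exp (-b) := Real.exp_pos _
    have h4 : Real.exp (-b) - Real.exp (-a) ≤ Real.exp (-b) * (a - b) := by
      rw [hexp]; nlinarith
    have h5 : 0 ≤ Real.exp (-b) - Real.exp (-a) := by
      have he1 : Real.exp (b - a) ≤ 1 := Real.exp_le_one_iff.mpr (by linarith)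
      rw [hexp]; nlinarith
    rw [abs_sub_comm (Real.exp (-a)), abs_of_nonneg h5, abs_of_nonneg (by linarith : (0:ℝ) ≤ a - b)]
    nlinarith [mul_le_mul_of_nonneg_right h2 (by linarith : (0:ℝ) ≤ a - b)]

private lemma sk_tangent (x y : ℝ) : Real.exp y * (1 + x - y) ≤ Real.exp x := by
  have h := Real.add_one_le_exp (x - y)
  have h2 := mul_le_mul_of_nonneg_left h (Real.exp_pos y).le
  rw [← Real.exp_add] at h2
  have : y + (x - y) = x := by ring
  rw [this] at h2
  nlinarith

private lemma sk_amgm {a b : ℝ} (ha : 0 ≤ a) (hb : 0 ≤ b) :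
    2 * (Real.sqrt a * Real.sqrt b) ≤ a + b := by
  nlinarith [sq_nonneg (Real.sqrt a - Real.sqrt b), Real.sq_sqrt ha, Real.sq_sqrt hb]

section SK
variable {n : ℕ} {I : Fin n → Type} [∀ ℓ, Fintype (I ℓ)] [∀ ℓ, DecidableEq (I ℓ)]

private def skV (X : (∀ ℓ, I ℓ) → ℝ) (lam : (Σ ℓ : Fin n, I ℓ) → ℝ) : (∀ ℓ, I ℓ) → ℝ :=
  fun k => X k * ∑ ℓ, lam ⟨ℓ, k ℓ⟩

private def skD (X : (∀ ℓ, I ℓ) → ℝ) (c : Σ ℓ : Fin n, I ℓ) : (∀ ℓ, I ℓ) → ℝ :=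
  fun k => X k * (if k c.1 = c.2 then 1 else 0)

private def skF (Q P : (∀ ℓ, I ℓ) → ℝ) (u : (∀ ℓ, I ℓ) → ℝ) : ℝ :=
  ∑ k, (Q k * Real.exp (-u k) + P k * u k)

private def skDir (Q X P : (∀ ℓ, I ℓ) → ℝ) (c : Σ ℓ : Fin n, I ℓ)
    (u : (∀ ℓ, I ℓ) → ℝ) : ℝ :=
  ∑ k, skD X c k * (P k - Q k * Real.exp (-u k))

variable {Q X P : (∀ ℓ, I ℓ) → ℝ} {p : ∀ ℓ, I ℓ → ℝ}

private lemma sk_hdual (hPm : ∀ ℓ j, (∑ k : ∀ ℓ, I ℓ, if k ℓ = j then X k * P k else 0) = p ℓ j)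
    (lam : (Σ ℓ : Fin n, I ℓ) → ℝ) : dualG Q X p lam = -skF Q P (skV X lam) := by
  have hlin : ∑ ℓ, ∑ j, lam ⟨ℓ, j⟩ * p ℓ j
      = ∑ k : ∀ ℓ, I ℓ, P k * skV X lam k := by
    calc ∑ ℓ, ∑ j, lam ⟨ℓ, j⟩ * p ℓ j
        = ∑ ℓ, ∑ j, ∑ k : ∀ ℓ, I ℓ, (if k ℓ = j then lam ⟨ℓ, j⟩ * (X k * P k) else 0) := by
          refine Finset.sum_congr rfl fun ℓ _ => Finset.sum_congr rfl fun j _ => ?_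
          rw [← hPm ℓ j, Finset.mul_sum]
          exact Finset.sum_congr rfl fun k _ => by rw [mul_ite, mul_zero]
      _ = ∑ ℓ, ∑ k : ∀ ℓ, I ℓ, ∑ j, (if k ℓ = j then lam ⟨ℓ, j⟩ * (X k * P k) else 0) :=
          Finset.sum_congr rfl fun ℓ _ => Finset.sum_comm
      _ = ∑ k : ∀ ℓ, I ℓ, ∑ ℓ, ∑ j, (if k ℓ = j then lam ⟨ℓ, j⟩ * (X k * P k) else 0) :=
          Finset.sum_comm
      _ = ∑ k : ∀ ℓ, I ℓ, ∑ ℓ, lam ⟨ℓ, k ℓ⟩ * (X k * P k) := by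
          refine Finset.sum_congr rfl fun k _ => Finset.sum_congr rfl fun ℓ _ => ?_
          have h0 : ∀ j : I ℓ, (if k ℓ = j then lam ⟨ℓ, j⟩ * (X k * P k) else 0)
              = (if k ℓ = j then lam ⟨ℓ, k ℓ⟩ * (X k * P k) else 0) := by
            intro j
            by_cases h : k ℓ = j
            · rw [if_pos h, if_pos h, h]
            · rw [if_neg h, if_neg h]
          rw [Finset.sum_congr rfl fun j _ => h0 j, Finset.sum_ite_eq, if_pos (Finset.mem_univ _)]
      _ = ∑ k : ∀ ℓ, I ℓ, P k * skV X lam k := by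
          refine Finset.sum_congr rfl fun k _ => ?_
          rw [skV, ← Finset.sum_mul]; ring
  rw [dualG, hlin, skF, Finset.sum_add_distrib]
  simp only [skV, neg_mul]
  ring

private lemma sk_vupdate (lam : (Σ ℓ : Fin n, I ℓ) → ℝ) (c : Σ ℓ : Fin n, I ℓ) (s : ℝ)
    (k : ∀ ℓ, I ℓ) :
    skV X (Function.update lam c s) k = skV X lam k + (s - lam c) * skD X c k := by
  have hsum : ∑ ℓ, Function.update lam c s ⟨ℓ, k ℓ⟩
      = (∑ ℓ, lam ⟨ℓ, k ℓ⟩) + (if k c.1 = c.2 then s - lam c else 0) := by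
    have h1 : ∀ ℓ, Function.update lam c s ⟨ℓ, k ℓ⟩
        = lam ⟨ℓ, k ℓ⟩ + (if (⟨ℓ, k ℓ⟩ : Σ ℓ, I ℓ) = c then s - lam c else 0) := by
      intro ℓ; rw [Function.update_apply]; split_ifs with h
      · rw [h]; ring
      · ring
    rw [Finset.sum_congr rfl fun ℓ _ => h1 ℓ, Finset.sum_add_distrib]
    congr 1
    obtain ⟨ℓ₀, j₀⟩ := c
    rw [Finset.sum_eq_single ℓ₀]
    · simp [Sigma.mk.inj_iff]
    · intro b _ hb
      rw [if_neg]
      intro hc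
      exact hb (congrArg Sigma.fst hc)
    · intro h; exact absurd (Finset.mem_univ ℓ₀) h
  rw [skV, skV, skD, hsum]
  split_ifs <;> ring

private lemma sk_slice (hX : ∀ k, X k = 1 ∨ X k = -1)
    (hPm : ∀ ℓ j, (∑ k : ∀ ℓ, I ℓ, if k ℓ = j then X k * P k else 0) = p ℓ j)
    (c : Σ ℓ : Fin n, I ℓ) : ∑ k, skD X c k * P k = p c.1 c.2 := by
  rw [← hPm c.1 c.2]
  refine Finset.sum_congr rfl fun k _ => ?_
  rw [skD]; split_ifs <;> ring

private lemma sk_Splus_pos (hQ : ∀ k, 0 < Q k) (hX : ∀ k, X k = 1 ∨ X k = -1)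
    (hP : ∀ k, 0 < P k) (hp : ∀ ℓ j, 0 < p ℓ j)
    (hPm : ∀ ℓ j, (∑ k : ∀ ℓ, I ℓ, if k ℓ = j then X k * P k else 0) = p ℓ j)
    (lam : (Σ ℓ : Fin n, I ℓ) → ℝ) (c : Σ ℓ : Fin n, I ℓ) :
    0 < Splus Q X lam c.1 c.2 := by
  have hex : ∃ k : ∀ ℓ, I ℓ, k c.1 = c.2 ∧ X k = 1 := by
    by_contra h
    push_neg at h
    have hle : (∑ k : ∀ ℓ, I ℓ, if k c.1 = c.2 then X k * P k else 0) ≤ 0 := by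
      refine Finset.sum_nonpos fun k _ => ?_
      split_ifs with h'
      · rcases hX k with h1 | h1
        · exact absurd h1 (h k h')
        · rw [h1]; nlinarith [hP k]
      · exact le_rfl
    have heq := hPm c.1 c.2
    have := hp c.1 c.2
    linarith
  obtain ⟨k₀, hk₀, hXk₀⟩ := hex
  rw [Splus]
  refine Finset.sum_pos' (fun k _ => ?_) ⟨k₀, Finset.mem_univ _, ?_⟩
  · split_ifs with h'
    · exact (mul_pos (hQ k) (Real.exp_pos _)).le
    · exact le_refl 0
  · rw [if_pos ⟨hk₀, hXk₀⟩]
    exact mul_pos (hQ k₀) (Real.exp_pos _)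

private lemma sk_Sminus_nonneg (hQ : ∀ k, 0 < Q k) (lam : (Σ ℓ : Fin n, I ℓ) → ℝ)
    (c : Σ ℓ : Fin n, I ℓ) : 0 ≤ Sminus Q X lam c.1 c.2 := by
  rw [Sminus]
  refine Finset.sum_nonneg fun k _ => ?_
  split_ifs with h'
  · exact (mul_pos (hQ k) (Real.exp_pos _)).le
  · exact le_refl 0

private lemma sk_GSink_root {Sp Sm pc : ℝ} (hSp : 0 < Sp) (hSm : 0 ≤ Sm) (hpc : 0 < pc) :
    0 < GSink Sp Sm pc ∧ Sp * (GSink Sp Sm pc) ^ 2 - pc * GSink Sp Sm pc - Sm = 0 := by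
  have hd : (0:ℝ) ≤ pc ^ 2 + 4 * Sp * Sm := by positivity
  have hs := Real.sq_sqrt hd
  have hsn := Real.sqrt_nonneg (pc ^ 2 + 4 * Sp * Sm)
  constructor
  · rw [GSink]
    exact div_pos (by linarith) (by linarith)
  · rw [GSink]
    set r := Real.sqrt (pc ^ 2 + 4 * Sp * Sm) with hr
    field_simp
    nlinarith [hs]

end SK

section SK2
variable {n : ℕ} {I : Fin n → Type} [∀ ℓ, Fintype (I ℓ)] [∀ ℓ, DecidableEq (I ℓ)]
variable {Q X P : (∀ ℓ, I ℓ) → ℝ} {p : ∀ ℓ, I ℓ → ℝ}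

private lemma sk_update_props (hQ : ∀ k, 0 < Q k) (hX : ∀ k, X k = 1 ∨ X k = -1)
    (hP : ∀ k, 0 < P k) (hp : ∀ ℓ j, 0 < p ℓ j)
    (hPm : ∀ ℓ j, (∑ k : ∀ ℓ, I ℓ, if k ℓ = j then X k * P k else 0) = p ℓ j)
    (lam : (Σ ℓ : Fin n, I ℓ) → ℝ) (c : Σ ℓ : Fin n, I ℓ) :
    ∃ τ : ℝ,
      (∀ k, skV X (gsUpdate Q X p lam c) k = skV X lam k + τ * skD X c k) ∧
      skDir Q X P c (skV X (gsUpdate Q X p lam c)) = 0 ∧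
      (∀ σ : ℝ, skF Q P (skV X (gsUpdate Q X p lam c))
        ≤ skF Q P (fun k => skV X lam k + σ * skD X c k)) := by
  obtain ⟨hα, hroot⟩ := sk_GSink_root (sk_Splus_pos hQ hX hP hp hPm lam c)
    (sk_Sminus_nonneg (X := X) hQ lam c) (hp c.1 c.2)
  set Sp := Splus Q X lam c.1 c.2 with hSp
  set Sm := Sminus Q X lam c.1 c.2 with hSm
  set pc := p c.1 c.2 with hpc
  set α := GSink Sp Sm pc with hαdef
  set s : ℝ := -Real.log α with hsdef
  have hupd : gsUpdate Q X p lam c = Function.update lam c s := rfl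
  set τ := s - lam c with hτ
  have hv : ∀ k, skV X (gsUpdate Q X p lam c) k = skV X lam k + τ * skD X c k := by
    intro k; rw [hupd, sk_vupdate]
  -- key exponential computation
  have hterm : ∀ k : ∀ ℓ, I ℓ, skD X c k * (Q k * Real.exp (-(skV X lam k + τ * skD X c k)))
      = (if k c.1 = c.2 ∧ X k = 1 then
          Q k * Real.exp (-∑ m ∈ Finset.univ.erase c.1, lam ⟨m, k m⟩) else 0) * α
      - (if k c.1 = c.2 ∧ X k = -1 then
          Q k * Real.exp (∑ m ∈ Finset.univ.erase c.1, lam ⟨m, k m⟩) else 0) * α⁻¹ := by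
    intro k
    by_cases hc : k c.1 = c.2
    · have hkc : (⟨c.1, k c.1⟩ : Σ ℓ : Fin n, I ℓ) = c :=
        (congrArg (Sigma.mk c.1) hc).trans (Sigma.eta c)
      have hsplit : ∑ ℓ, lam ⟨ℓ, k ℓ⟩
          = lam c + ∑ m ∈ Finset.univ.erase c.1, lam ⟨m, k m⟩ := by
        rw [add_comm, ← hkc]
        exact (Finset.sum_erase_add Finset.univ _ (Finset.mem_univ c.1)).symm
      have hexpa : Real.exp (-s) = α := by
        rw [hsdef, neg_neg, Real.exp_log hα]
      have hexpb : Real.exp s = α⁻¹ := by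
        rw [hsdef, Real.exp_neg, Real.exp_log hα]
      rcases hX k with h1 | h1
      · rw [if_pos ⟨hc, h1⟩, if_neg (by rw [h1]; norm_num)]
        rw [skD, skV, if_pos hc, h1, hsplit]
        rw [show -(1 * (lam c + ∑ m ∈ Finset.univ.erase c.1, lam ⟨m, k m⟩) + τ * (1 * 1))
            = (-∑ m ∈ Finset.univ.erase c.1, lam ⟨m, k m⟩) + (-s) by rw [hτ]; ring]
        rw [Real.exp_add, hexpa]
        ring
      · rw [if_neg (by rw [h1]; norm_num), if_pos ⟨hc, h1⟩]
        rw [skD, skV, if_pos hc, h1, hsplit]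
        rw [show -(-1 * (lam c + ∑ m ∈ Finset.univ.erase c.1, lam ⟨m, k m⟩) + τ * (-1 * 1))
            = (∑ m ∈ Finset.univ.erase c.1, lam ⟨m, k m⟩) + s by rw [hτ]; ring]
        rw [Real.exp_add, hexpb]
        ring
    · rw [if_neg (fun h => hc h.1), if_neg (fun h => hc h.1), skD, if_neg hc]
      ring
  have hstat : skDir Q X P c (skV X (gsUpdate Q X p lam c)) = 0 := by
    have hu' : skV X (gsUpdate Q X p lam c) = fun k => skV X lam k + τ * skD X c k :=
      funext hv
    rw [skDir, hu']
    have hsplit2 : ∀ k : ∀ ℓ, I ℓ, skD X c k * (P k - Q k * Real.exp (-(skV X lam k + τ * skD X c k)))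
        = skD X c k * P k - (skD X c k * (Q k * Real.exp (-(skV X lam k + τ * skD X c k)))) := by
      intro k; ring
    rw [Finset.sum_congr rfl fun k _ => (hsplit2 k).trans (by rw [hterm k])]
    rw [Finset.sum_sub_distrib, Finset.sum_sub_distrib, ← Finset.sum_mul, ← Finset.sum_mul]
    rw [sk_slice hX hPm c]
    have hSpdef : (∑ k : ∀ ℓ, I ℓ, if k c.1 = c.2 ∧ X k = 1 then
        Q k * Real.exp (-∑ m ∈ Finset.univ.erase c.1, lam ⟨m, k m⟩) else 0) = Sp := rfl
    have hSmdef : (∑ k : ∀ ℓ, I ℓ, if k c.1 = c.2 ∧ X k = -1 then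
        Q k * Real.exp (∑ m ∈ Finset.univ.erase c.1, lam ⟨m, k m⟩) else 0) = Sm := rfl
    rw [hSpdef, hSmdef, ← hpc]
    have hαne : α ≠ 0 := ne_of_gt hα
    field_simp
    nlinarith [hroot]
  refine ⟨τ, hv, hstat, ?_⟩
  intro σ
  have hu' : skV X (gsUpdate Q X p lam c) = fun k => skV X lam k + τ * skD X c k :=
    funext hv
  have per : ∀ k : ∀ ℓ, I ℓ,
      (Q k * Real.exp (-(skV X lam k + τ * skD X c k)) + P k * (skV X lam k + τ * skD X c k))
        + (σ - τ) * (skD X c k * (P k - Q k * Real.exp (-(skV X lam k + τ * skD X c k))))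
      ≤ Q k * Real.exp (-(skV X lam k + σ * skD X c k)) + P k * (skV X lam k + σ * skD X c k) := by
    intro k
    have ht := sk_tangent (-(skV X lam k + σ * skD X c k)) (-(skV X lam k + τ * skD X c k))
    have ht2 := mul_le_mul_of_nonneg_left ht (hQ k).le
    nlinarith [ht2]
  have hsum := Finset.sum_le_sum (fun k (_ : k ∈ Finset.univ) => per k)
  rw [Finset.sum_add_distrib, ← Finset.mul_sum] at hsum
  have hdir0 : (∑ k : ∀ ℓ, I ℓ, skD X c k * (P k - Q k * Real.exp (-(skV X lam k + τ * skD X c k)))) = 0 := by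
    have := hstat
    rw [skDir, hu'] at this
    exact this
  rw [hdir0, mul_zero, add_zero] at hsum
  rw [skF, skF, hu']
  exact hsum
end SK2

section SK3
variable {n : ℕ} {I : Fin n → Type} [∀ ℓ, Fintype (I ℓ)] [∀ ℓ, DecidableEq (I ℓ)]
variable {Q X P : (∀ ℓ, I ℓ) → ℝ} {p : ∀ ℓ, I ℓ → ℝ}

private lemma sk_box [∀ ℓ, Nonempty (I ℓ)] (hQ : ∀ k, 0 < Q k) (hP : ∀ k, 0 < P k) (F0 : ℝ) :
    ∃ m M : ℝ, ∀ u : (∀ ℓ, I ℓ) → ℝ, skF Q P u ≤ F0 → ∀ k, m ≤ u k ∧ u k ≤ M := by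
  have hK : Nonempty (∀ ℓ, I ℓ) := ⟨fun ℓ => Classical.arbitrary _⟩
  have hne : (Finset.univ : Finset (∀ ℓ, I ℓ)).Nonempty := Finset.univ_nonempty
  set Hmax : ℝ := F0 + ∑ k : ∀ ℓ, I ℓ, (P k) ^ 2 / Q k with hHmax
  clear_value Hmax
  have hquad : ∀ x : ℝ, x < 0 → x ^ 2 / 4 ≤ Real.exp (-x) := by
    intro x hx
    have := sk_quadA (s := -x) (by linarith)
    nlinarith
  have hlow : ∀ (k : ∀ ℓ, I ℓ) (x : ℝ), -((P k) ^ 2 / Q k) ≤ Q k * Real.exp (-x) + P k * x := by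
    intro k x
    rcases le_or_gt 0 x with hx | hx
    · have h1 : 0 < Q k * Real.exp (-x) := mul_pos (hQ k) (Real.exp_pos _)
      have h2 : 0 ≤ P k * x := mul_nonneg (hP k).le hx
      have h3 : 0 ≤ (P k) ^ 2 / Q k := div_nonneg (sq_nonneg _) (hQ k).le
      linarith
    · have h2 : Q k * (x ^ 2 / 4) ≤ Q k * Real.exp (-x) :=
        mul_le_mul_of_nonneg_left (hquad x hx) (hQ k).le
      have hc : Q k * ((P k) ^ 2 / Q k) = (P k) ^ 2 := mul_div_cancel₀ _ (ne_of_gt (hQ k))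
      have h5 : -((P k) ^ 2 / Q k) ≤ Q k * (x ^ 2 / 4) + P k * x := by
        nlinarith [sq_nonneg (Q k * x / 2 + P k), hQ k, sq_nonneg x]
      linarith
  have hterm_le : ∀ u : (∀ ℓ, I ℓ) → ℝ, skF Q P u ≤ F0 →
      ∀ k, Q k * Real.exp (-u k) + P k * u k ≤ Hmax := by
    intro u hu k
    have h1 : (Q k * Real.exp (-u k) + P k * u k)
        + ∑ k' ∈ Finset.univ.erase k, (Q k' * Real.exp (-u k') + P k' * u k')
        = skF Q P u := by
      rw [skF]
      exact Finset.add_sum_erase _ (fun k' => Q k' * Real.exp (-u k') + P k' * u k')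
        (Finset.mem_univ k)
    have h2 : ∑ k' ∈ Finset.univ.erase k, (-((P k') ^ 2 / Q k'))
        ≤ ∑ k' ∈ Finset.univ.erase k, (Q k' * Real.exp (-u k') + P k' * u k') :=
      Finset.sum_le_sum fun k' _ => hlow k' (u k')
    have h3 : ∑ k' ∈ Finset.univ.erase k, (P k') ^ 2 / Q k'
        ≤ ∑ k' : ∀ ℓ, I ℓ, (P k') ^ 2 / Q k' :=
      Finset.sum_le_sum_of_subset_of_nonneg (Finset.erase_subset _ _)
        (fun i _ _ => div_nonneg (sq_nonneg _) (hQ i).le)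
    have h4 : ∑ k' ∈ Finset.univ.erase k, (-((P k') ^ 2 / Q k'))
        = -∑ k' ∈ Finset.univ.erase k, (P k') ^ 2 / Q k' := by
      rw [Finset.sum_neg_distrib]
    linarith
  refine ⟨min 0 (Finset.univ.inf' hne fun k => -(4 * (P k + |Hmax| + 1)) / Q k - 1),
    Finset.univ.sup' hne (fun k => Hmax / P k), fun u hu k => ⟨?_, ?_⟩⟩
  · rcases le_or_gt 0 (u k) with hx | hx
    · exact le_trans (min_le_left _ _) hx
    · refine le_trans (min_le_right _ _) (le_trans (Finset.inf'_le _ (Finset.mem_univ k)) ?_)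
      by_contra hcon
      push_neg at hcon
      set x := u k with hxdef
      have hA : Q k * (x ^ 2 / 4) + P k * x ≤ |Hmax| := by
        have h2 := mul_le_mul_of_nonneg_left (hquad x hx) (hQ k).le
        have h3 := hterm_le u hu k
        have h4 := le_abs_self Hmax
        linarith
      have h7 : Q k * (-(4 * (P k + |Hmax| + 1)) / Q k - 1)
          = -(4 * (P k + |Hmax| + 1)) - Q k := by
        rw [mul_sub, mul_one, mul_div_cancel₀ _ (ne_of_gt (hQ k))]
      have h5 : Q k * x < -(4 * (P k + |Hmax| + 1)) - Q k := by
        have h6 := (mul_lt_mul_iff_right₀ (hQ k)).mpr hcon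
        linarith
      have hT : 0 < (4 * (P k + |Hmax| + 1)) / Q k := by
        apply div_pos ?_ (hQ k)
        have := abs_nonneg Hmax
        nlinarith [hP k]
      have hx1 : (1:ℝ) ≤ -x := by
        have : -(4 * (P k + |Hmax| + 1)) / Q k = -((4 * (P k + |Hmax| + 1)) / Q k) := by ring
        rw [this] at hcon
        linarith
      have h8 : |Hmax| + 1 ≤ -(Q k * x / 4 + P k) := by linarith [hQ k]
      have h12 := mul_le_mul h8 hx1 (by norm_num) (by linarith [abs_nonneg Hmax])
      nlinarith [h12, hA]
  · refine le_trans ?_ (Finset.le_sup' (fun k => Hmax / P k) (Finset.mem_univ k))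
    have h1 := hterm_le u hu k
    have h2 : 0 < Q k * Real.exp (-u k) := mul_pos (hQ k) (Real.exp_pos _)
    rw [le_div_iff₀ (hP k)]
    nlinarith

/-- summed strong-convexity lower estimate -/
private lemma sk_L1sum {M μ4 : ℝ} (hQ : ∀ k, 0 < Q k)
    (hmu : ∀ k : ∀ ℓ, I ℓ, μ4 ≤ Q k * Real.exp (-M))
    (u u' : (∀ ℓ, I ℓ) → ℝ) (hu : ∀ k, u k ≤ M) (hu' : ∀ k, u' k ≤ M) :
    skF Q P u' + (∑ k, (P k - Q k * Real.exp (-u' k)) * (u k - u' k))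
      + μ4 / 4 * ∑ k, (u k - u' k) ^ 2 ≤ skF Q P u := by
  have per : ∀ k : ∀ ℓ, I ℓ,
      (Q k * Real.exp (-u' k) + P k * u' k) + (P k - Q k * Real.exp (-u' k)) * (u k - u' k)
        + μ4 / 4 * (u k - u' k) ^ 2
      ≤ Q k * Real.exp (-u k) + P k * u k := by
    intro k
    have h1 := sk_L1core (M := M) (a := u k) (b := u' k) (hu k) (hu' k)
    have h2 := mul_le_mul_of_nonneg_left h1 (hQ k).le
    have h3 : μ4 / 4 * (u k - u' k) ^ 2 ≤ Q k * Real.exp (-M) * (u k - u' k) ^ 2 / 4 := by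
      nlinarith [sq_nonneg (u k - u' k), hmu k]
    nlinarith [h2, h3]
  have hsum := Finset.sum_le_sum (fun k (_ : k ∈ Finset.univ) => per k)
  rw [Finset.sum_add_distrib, Finset.sum_add_distrib, ← Finset.mul_sum] at hsum
  exact hsum

/-- Lipschitz estimate for directional derivatives -/
private lemma sk_dirLip {m L : ℝ} (hQ : ∀ k, 0 < Q k) (hX : ∀ k, X k = 1 ∨ X k = -1)
    (hL : ∀ k : ∀ ℓ, I ℓ, Q k * Real.exp (-m) ≤ L) (c : Σ ℓ : Fin n, I ℓ)
    (u u' : (∀ ℓ, I ℓ) → ℝ) (hu : ∀ k, m ≤ u k) (hu' : ∀ k, m ≤ u' k) :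
    |skDir Q X P c u - skDir Q X P c u'| ≤ L * ∑ k, |u k - u' k| := by
  have hdiff : skDir Q X P c u - skDir Q X P c u'
      = ∑ k, skD X c k * (Q k * (Real.exp (-u' k) - Real.exp (-u k))) := by
    rw [skDir, skDir, ← Finset.sum_sub_distrib]
    exact Finset.sum_congr rfl fun k _ => by ring
  rw [hdiff]
  refine le_trans (Finset.abs_sum_le_sum_abs _ _) ?_
  rw [Finset.mul_sum]
  refine Finset.sum_le_sum fun k _ => ?_
  have hD : |skD X c k| ≤ 1 := by
    rw [skD, abs_mul]
    rcases hX k with h1 | h1 <;> rw [h1] <;> split_ifs <;> simp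
  have hE : |Real.exp (-u' k) - Real.exp (-u k)| ≤ Real.exp (-m) * |u' k - u k| :=
    sk_L3core (hu' k) (hu k)
  have hQk := hQ k
  have hLk := hL k
  calc |skD X c k * (Q k * (Real.exp (-u' k) - Real.exp (-u k)))|
      = |skD X c k| * (Q k * |Real.exp (-u' k) - Real.exp (-u k)|) := by
        rw [abs_mul, abs_mul, abs_of_pos hQk]
    _ ≤ 1 * (Q k * (Real.exp (-m) * |u' k - u k|)) := by
        refine mul_le_mul hD (mul_le_mul_of_nonneg_left hE hQk.le) ?_ ?_
        · positivity
        · norm_num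
    _ ≤ L * |u k - u' k| := by
        rw [one_mul, abs_sub_comm]
        have h0 : 0 ≤ |u k - u' k| := abs_nonneg _
        nlinarith [hLk, h0]
end SK3

section SK4
variable {n : ℕ} {I : Fin n → Type} [∀ ℓ, Fintype (I ℓ)] [∀ ℓ, DecidableEq (I ℓ)]
variable {Q X P : (∀ ℓ, I ℓ) → ℝ} {p : ∀ ℓ, I ℓ → ℝ}

private lemma sk_Dsq_ge_one [∀ ℓ, Nonempty (I ℓ)] (hX : ∀ k, X k = 1 ∨ X k = -1)
    (c : Σ ℓ : Fin n, I ℓ) : 1 ≤ ∑ k, (skD X c k) ^ 2 := by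
  obtain ⟨k₀, hk₀⟩ : ∃ k : ∀ ℓ, I ℓ, k c.1 = c.2 := by
    obtain ⟨ℓ₀, j₀⟩ := c
    exact ⟨fun m => if h : m = ℓ₀ then cast (congrArg I h.symm) j₀
      else Classical.arbitrary _, by simp⟩
  have h1 : (skD X c k₀) ^ 2 = 1 := by
    rw [skD, if_pos hk₀, mul_one]
    rcases hX k₀ with h | h <;> rw [h] <;> norm_num
  calc (1:ℝ) = (skD X c k₀) ^ 2 := h1.symm
    _ ≤ ∑ k, (skD X c k) ^ 2 :=
        Finset.single_le_sum (f := fun k => (skD X c k) ^ 2)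
          (fun k _ => sq_nonneg _) (Finset.mem_univ k₀)

private lemma sk_absD_le_one (hX : ∀ k, X k = 1 ∨ X k = -1) (c : Σ ℓ : Fin n, I ℓ)
    (k : ∀ ℓ, I ℓ) : |skD X c k| ≤ 1 := by
  rw [skD, abs_mul]
  rcases hX k with h | h <;> rw [h] <;> split_ifs <;> simp

set_option maxHeartbeats 2000000 in
private lemma sk_key [∀ ℓ, Nonempty (I ℓ)] (hQ : ∀ k, 0 < Q k) (hX : ∀ k, X k = 1 ∨ X k = -1)
    (hP : ∀ k, 0 < P k) (hp : ∀ ℓ j, 0 < p ℓ j)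
    (hPm : ∀ ℓ j, (∑ k : ∀ ℓ, I ℓ, if k ℓ = j then X k * P k else 0) = p ℓ j)
    {F0 m M μ4 L : ℝ} (hμpos : 0 < μ4)
    (hbox : ∀ u : (∀ ℓ, I ℓ) → ℝ, skF Q P u ≤ F0 → ∀ k, m ≤ u k ∧ u k ≤ M)
    (hmu : ∀ k : ∀ ℓ, I ℓ, μ4 ≤ Q k * Real.exp (-M))
    (hL : ∀ k : ∀ ℓ, I ℓ, Q k * Real.exp (-m) ≤ L)
    (l : List (Σ ℓ : Fin n, I ℓ)) :
    ∀ lam : (Σ ℓ : Fin n, I ℓ) → ℝ, skF Q P (skV X lam) ≤ F0 →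
      skF Q P (skV X (l.foldl (fun l' c => gsUpdate Q X p l' c) lam)) ≤ skF Q P (skV X lam) ∧
      ∃ S : ℝ, 0 ≤ S ∧
        μ4 * S ^ 2 ≤ 4 * (l.length : ℝ) *
          (skF Q P (skV X lam) - skF Q P (skV X (l.foldl (fun l' c => gsUpdate Q X p l' c) lam))) ∧
        ∀ c ∈ l, |skDir Q X P c (skV X lam)|
          ≤ L * (Fintype.card (∀ ℓ, I ℓ) : ℝ) * S := by
  have hKne : Nonempty (∀ ℓ, I ℓ) := ⟨fun ℓ => Classical.arbitrary _⟩
  have hLpos : 0 < L := lt_of_lt_of_le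
    (mul_pos (hQ (Classical.arbitrary _)) (Real.exp_pos (-m))) (hL _)
  induction l with
  | nil =>
    intro lam hlam
    exact ⟨le_rfl, 0, le_rfl, by norm_num, fun c hc => absurd hc List.not_mem_nil⟩
  | cons c l' ih =>
    intro lam hlam
    have hKcpos : (0:ℝ) < (Fintype.card (∀ ℓ, I ℓ) : ℝ) := by
      exact_mod_cast Fintype.card_pos
    obtain ⟨τ, hv, hstat, hmin⟩ := sk_update_props hQ hX hP hp hPm lam c
    set lam₁ := gsUpdate Q X p lam c with hlam₁
    have hfold : (c :: l').foldl (fun l' c => gsUpdate Q X p l' c) lam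
        = l'.foldl (fun l' c => gsUpdate Q X p l' c) lam₁ := rfl
    have hdec1 : skF Q P (skV X lam₁) ≤ skF Q P (skV X lam) := by
      have h0 := hmin 0
      have he : (fun k => skV X lam k + 0 * skD X c k) = skV X lam :=
        funext fun k => by ring
      rwa [he] at h0
    have hbox1 : skF Q P (skV X lam₁) ≤ F0 := le_trans hdec1 hlam
    have hb0 := hbox _ hlam
    have hb1 := hbox _ hbox1
    have hsc := sk_L1sum (P := P) hQ hmu (skV X lam) (skV X lam₁)
      (fun k => (hbox _ hlam k).2) (fun k => (hbox _ hbox1 k).2)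
    have hmid : (∑ k, (P k - Q k * Real.exp (-(skV X lam₁ k))) * (skV X lam k - skV X lam₁ k))
        = (-τ) * skDir Q X P c (skV X lam₁) := by
      rw [skDir, Finset.mul_sum]
      refine Finset.sum_congr rfl fun k _ => ?_
      have hd : skV X lam k - skV X lam₁ k = -τ * skD X c k := by
        rw [hv k]; ring
      rw [hd]; ring
    have hsq : (∑ k, (skV X lam k - skV X lam₁ k) ^ 2) = τ ^ 2 * ∑ k, (skD X c k) ^ 2 := by
      rw [Finset.mul_sum]
      refine Finset.sum_congr rfl fun k _ => ?_
      have hd : skV X lam k - skV X lam₁ k = -τ * skD X c k := by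
        rw [hv k]; ring
      rw [hd]; ring
    have htau2 : μ4 * τ ^ 2 ≤ 4 * (skF Q P (skV X lam) - skF Q P (skV X lam₁)) := by
      have h1 := sk_Dsq_ge_one hX c
      have h2 : (0:ℝ) ≤ τ ^ 2 := sq_nonneg _
      rw [hmid, hstat, mul_zero, add_zero, hsq] at hsc
      nlinarith [hsc, mul_le_mul_of_nonneg_left h1 (mul_nonneg (le_of_lt hμpos) h2)]
    have hmove : (∑ k, |skV X lam k - skV X lam₁ k|)
        ≤ |τ| * (Fintype.card (∀ ℓ, I ℓ) : ℝ) := by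
      have h1 : ∀ k : ∀ ℓ, I ℓ, |skV X lam k - skV X lam₁ k| ≤ |τ| := by
        intro k
        have hd : skV X lam k - skV X lam₁ k = -τ * skD X c k := by
          rw [hv k]; ring
        rw [hd, abs_mul, abs_neg]
        nlinarith [sk_absD_le_one hX c k, abs_nonneg τ, abs_nonneg (skD X c k)]
      calc (∑ k, |skV X lam k - skV X lam₁ k|) ≤ ∑ _k : ∀ ℓ, I ℓ, |τ| :=
            Finset.sum_le_sum fun k _ => h1 k
        _ = (Fintype.card (∀ ℓ, I ℓ) : ℝ) * |τ| := by
            rw [Finset.sum_const]; simp [Finset.card_univ, mul_comm]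
        _ = |τ| * (Fintype.card (∀ ℓ, I ℓ) : ℝ) := by ring
    obtain ⟨hdec', S', hS'0, hS'2, hS'dir⟩ := ih lam₁ hbox1
    rw [hfold]
    set Fl := skF Q P (skV X lam) with hFl
    set F1 := skF Q P (skV X lam₁) with hF1
    set Fe := skF Q P (skV X (l'.foldl (fun l' c => gsUpdate Q X p l' c) lam₁)) with hFe
    clear_value Fl F1 Fe
    have hd1 : 0 ≤ Fl - F1 := by linarith
    have hD' : 0 ≤ F1 - Fe := by linarith
    refine ⟨by linarith, S' + |τ|, by positivity, ?_, ?_⟩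
    · have hcast : (((c :: l').length : ℕ) : ℝ) = (l'.length : ℝ) + 1 := by
        push_cast [List.length_cons]; ring
      rw [hcast]
      set len' : ℝ := (l'.length : ℝ) with hlen
      clear_value len'
      have hlen0 : (0:ℝ) ≤ len' := by rw [hlen]; positivity
      have e1 : μ4 * (S' + |τ|) ^ 2 = μ4 * S' ^ 2 + μ4 * (2 * (S' * |τ|)) + μ4 * τ ^ 2 := by
        rw [add_sq, sq_abs]; ring
      rcases Nat.eq_zero_or_pos l'.length with h0 | hposn
      · have hlen0' : len' = 0 := by rw [hlen, h0]; norm_num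
        have hS'z : S' = 0 := by
          rw [hlen0'] at hS'2
          have h9 : μ4 * S' ^ 2 ≤ 0 := by nlinarith [hS'2]
          have h10 : S' ^ 2 ≤ 0 := by nlinarith [h9, hμpos]
          have h11 : S' ≤ 0 := by nlinarith [h10]
          linarith
        rw [e1, hS'z, hlen0']
        nlinarith [htau2, hD']
      · have hlen1 : (1:ℝ) ≤ len' := by rw [hlen]; exact_mod_cast hposn
        have hlenpos : (0:ℝ) < len' := by linarith
        have h1 : 2 * (S' * |τ|) * len' ≤ S' ^ 2 + len' ^ 2 * τ ^ 2 := by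
          nlinarith [sq_nonneg (S' - len' * |τ|), sq_abs τ]
        have h2 := mul_le_mul_of_nonneg_left h1 hμpos.le
        have h3 : μ4 * (len' ^ 2 * τ ^ 2) ≤ len' ^ 2 * (4 * (Fl - F1)) := by
          nlinarith [mul_le_mul_of_nonneg_left htau2 (mul_nonneg hlen0 hlen0)]
        have h6 : μ4 * (2 * (S' * |τ|)) ≤ 4 * (F1 - Fe) + 4 * len' * (Fl - F1) := by
          refine le_of_mul_le_mul_right ?_ hlenpos
          nlinarith [h2, h3, hS'2]
        rw [e1]
        nlinarith [hS'2, h6, htau2]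
    · intro c'' hc''
      rcases List.mem_cons.mp hc'' with rfl | hmem
      · have h7 := sk_dirLip (P := P) (m := m) (L := L) hQ hX hL c'' (skV X lam) (skV X lam₁)
          (fun k => (hb0 k).1) (fun k => (hb1 k).1)
        have h8 : |skDir Q X P c'' (skV X lam)|
            = |skDir Q X P c'' (skV X lam) - skDir Q X P c'' (skV X lam₁)| := by
          rw [hstat, sub_zero]
        rw [h8]
        have h9 := mul_le_mul_of_nonneg_left hmove hLpos.le
        calc |skDir Q X P c'' (skV X lam) - skDir Q X P c'' (skV X lam₁)|
            ≤ L * ∑ k, |skV X lam k - skV X lam₁ k| := h7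
          _ ≤ L * (|τ| * (Fintype.card (∀ ℓ, I ℓ) : ℝ)) := h9
          _ ≤ L * (Fintype.card (∀ ℓ, I ℓ) : ℝ) * (S' + |τ|) := by
              nlinarith [mul_nonneg (mul_nonneg hLpos.le hKcpos.le) hS'0]
      · have h8 := hS'dir c'' hmem
        have h9 := sk_dirLip (P := P) (m := m) (L := L) hQ hX hL c'' (skV X lam) (skV X lam₁)
          (fun k => (hb0 k).1) (fun k => (hb1 k).1)
        have h10 : |skDir Q X P c'' (skV X lam)|
            ≤ |skDir Q X P c'' (skV X lam₁)|
              + |skDir Q X P c'' (skV X lam) - skDir Q X P c'' (skV X lam₁)| := by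
          have := abs_add_le (skDir Q X P c'' (skV X lam₁))
            (skDir Q X P c'' (skV X lam) - skDir Q X P c'' (skV X lam₁))
          simpa using this
        have h11 := mul_le_mul_of_nonneg_left hmove hLpos.le
        nlinarith [h8, h9, h10, h11, mul_nonneg (mul_nonneg hLpos.le hKcpos.le) hS'0,
          mul_nonneg (mul_nonneg hLpos.le hKcpos.le) (abs_nonneg τ)]
end SK4

section SK5
variable {n : ℕ} {I : Fin n → Type} [∀ ℓ, Fintype (I ℓ)] [∀ ℓ, DecidableEq (I ℓ)]
variable {Q X P : (∀ ℓ, I ℓ) → ℝ} {p : ∀ ℓ, I ℓ → ℝ}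

private lemma sk_vsub (X : (∀ ℓ, I ℓ) → ℝ) (a b : (Σ ℓ : Fin n, I ℓ) → ℝ) (k : ∀ ℓ, I ℓ) :
    skV X (a - b) k = skV X a k - skV X b k := by
  rw [skV, skV, skV]
  have : ∑ ℓ, (a - b) ⟨ℓ, k ℓ⟩ = (∑ ℓ, a ⟨ℓ, k ℓ⟩) - ∑ ℓ, b ⟨ℓ, k ℓ⟩ := by
    rw [← Finset.sum_sub_distrib]
    exact Finset.sum_congr rfl fun ℓ _ => rfl
  rw [this]; ring

private lemma sk_vspan (X : (∀ ℓ, I ℓ) → ℝ) (γ : (Σ ℓ : Fin n, I ℓ) → ℝ) (k : ∀ ℓ, I ℓ) :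
    skV X γ k = ∑ c : Σ ℓ : Fin n, I ℓ, γ c * skD X c k := by
  rw [skV]
  rw [← Finset.univ_sigma_univ, Finset.sum_sigma]
  have h1 : ∀ ℓ, ∑ j : I ℓ, γ ⟨ℓ, j⟩ * skD X ⟨ℓ, j⟩ k = γ ⟨ℓ, k ℓ⟩ * X k := by
    intro ℓ
    have h2 : ∀ j : I ℓ, γ ⟨ℓ, j⟩ * skD X ⟨ℓ, j⟩ k
        = (if k ℓ = j then γ ⟨ℓ, k ℓ⟩ * X k else 0) := by
      intro j
      rw [skD]
      by_cases h : k ℓ = j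
      · rw [if_pos h, if_pos h, ← h]; ring
      · rw [if_neg h, if_neg h]; ring
    rw [Finset.sum_congr rfl fun j _ => h2 j, Finset.sum_ite_eq, if_pos (Finset.mem_univ _)]
  rw [Finset.sum_congr rfl fun ℓ _ => h1 ℓ, ← Finset.sum_mul]
  ring

private lemma sk_norm_sq_le (u : (∀ ℓ, I ℓ) → ℝ) : ‖u‖ ^ 2 ≤ ∑ k, (u k) ^ 2 := by
  have h1 : ‖u‖ ≤ Real.sqrt (∑ k, (u k) ^ 2) := by
    rw [pi_norm_le_iff_of_nonneg (Real.sqrt_nonneg _)]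
    intro k
    rw [Real.norm_eq_abs, ← Real.sqrt_sq_eq_abs]
    exact Real.sqrt_le_sqrt (Finset.single_le_sum (f := fun k => (u k) ^ 2)
      (fun k _ => sq_nonneg _) (Finset.mem_univ k))
  calc ‖u‖ ^ 2 ≤ (Real.sqrt (∑ k, (u k) ^ 2)) ^ 2 := by
        nlinarith [h1, norm_nonneg u, Real.sqrt_nonneg (∑ k, (u k) ^ 2)]
    _ = ∑ k, (u k) ^ 2 := Real.sq_sqrt (Finset.sum_nonneg fun k _ => sq_nonneg _)

/-- the scaling map as a linear map -/
private def skVL (X : (∀ ℓ, I ℓ) → ℝ) :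
    ((Σ ℓ : Fin n, I ℓ) → ℝ) →ₗ[ℝ] ((∀ ℓ, I ℓ) → ℝ) where
  toFun := skV X
  map_add' := fun a b => funext fun k => by
    simp only [skV, Pi.add_apply]
    rw [Finset.sum_add_distrib]; ring
  map_smul' := fun r a => funext fun k => by
    simp only [skV, Pi.smul_apply, smul_eq_mul, RingHom.id_apply]
    rw [← Finset.mul_sum]; ring

private lemma sk_kappa (X : (∀ ℓ, I ℓ) → ℝ) :
    ∃ κ : ℝ, 0 ≤ κ ∧ ∀ γ₀ : (Σ ℓ : Fin n, I ℓ) → ℝ, ∃ γ : (Σ ℓ : Fin n, I ℓ) → ℝ,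
      skV X γ = skV X γ₀ ∧ (∑ c : Σ ℓ : Fin n, I ℓ, |γ c|) ≤ κ * ‖skV X γ₀‖ := by
  classical
  obtain ⟨R, hR⟩ := LinearMap.exists_rightInverse_of_surjective
    (skVL (n := n) (I := I) X).rangeRestrict (LinearMap.range_rangeRestrict _)
  refine ⟨∑ c : Σ ℓ : Fin n, I ℓ,
      ‖LinearMap.toContinuousLinearMap ((LinearMap.proj c).comp R)‖,
    Finset.sum_nonneg fun c _ => ContinuousLinearMap.opNorm_nonneg _, fun γ₀ => ?_⟩
  set x : LinearMap.range (skVL (n := n) (I := I) X) :=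
    ⟨skVL (n := n) (I := I) X γ₀, LinearMap.mem_range_self _ γ₀⟩ with hx
  refine ⟨R x, ?_, ?_⟩
  · have h1 := LinearMap.ext_iff.mp hR x
    have h4 := congrArg (Subtype.val) h1
    exact h4
  · have hxnorm : ‖x‖ = ‖skV X γ₀‖ := rfl
    calc (∑ c : Σ ℓ : Fin n, I ℓ, |R x c|)
        = ∑ c : Σ ℓ : Fin n, I ℓ, ‖((LinearMap.proj c).comp R) x‖ := by
          refine Finset.sum_congr rfl fun c _ => ?_
          rw [Real.norm_eq_abs]; rfl
      _ ≤ ∑ c : Σ ℓ : Fin n, I ℓ,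
            ‖LinearMap.toContinuousLinearMap ((LinearMap.proj c).comp R)‖ * ‖x‖ := by
          refine Finset.sum_le_sum fun c _ => ?_
          have h5 := ContinuousLinearMap.le_opNorm
            (LinearMap.toContinuousLinearMap ((LinearMap.proj c).comp R)) x
          simpa using h5
      _ = (∑ c : Σ ℓ : Fin n, I ℓ,
            ‖LinearMap.toContinuousLinearMap ((LinearMap.proj c).comp R)‖) * ‖skV X γ₀‖ := by
          rw [← Finset.sum_mul, hxnorm]

set_option maxHeartbeats 2000000 in
private lemma sk_contract [∀ ℓ, Nonempty (I ℓ)] (hQ : ∀ k, 0 < Q k)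
    (hX : ∀ k, X k = 1 ∨ X k = -1) (hP : ∀ k, 0 < P k) (hp : ∀ ℓ j, 0 < p ℓ j)
    (hPm : ∀ ℓ j, (∑ k : ∀ ℓ, I ℓ, if k ℓ = j then X k * P k else 0) = p ℓ j)
    {F0 m M μ4 L κ : ℝ} (hμpos : 0 < μ4) (hLpos : 0 < L)
    (hbox : ∀ u : (∀ ℓ, I ℓ) → ℝ, skF Q P u ≤ F0 → ∀ k, m ≤ u k ∧ u k ≤ M)
    (hmu : ∀ k : ∀ ℓ, I ℓ, μ4 ≤ Q k * Real.exp (-M))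
    (hL : ∀ k : ∀ ℓ, I ℓ, Q k * Real.exp (-m) ≤ L)
    (hκ0 : 0 ≤ κ)
    (hκ : ∀ γ₀ : (Σ ℓ : Fin n, I ℓ) → ℝ, ∃ γ : (Σ ℓ : Fin n, I ℓ) → ℝ,
      skV X γ = skV X γ₀ ∧ (∑ c : Σ ℓ : Fin n, I ℓ, |γ c|) ≤ κ * ‖skV X γ₀‖)
    (lamM : (Σ ℓ : Fin n, I ℓ) → ℝ)
    (hMbox : skF Q P (skV X lamM) ≤ F0)
    (ord : List (Σ ℓ : Fin n, I ℓ)) (hord₂ : ∀ c, c ∈ ord)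
    (lam : (Σ ℓ : Fin n, I ℓ) → ℝ) (hlamF : skF Q P (skV X lam) ≤ F0) :
    skF Q P (skV X (gsSweep Q X p ord lam)) ≤ skF Q P (skV X lam) ∧
    skF Q P (skV X lam) - skF Q P (skV X lamM)
      ≤ (κ * L * (Fintype.card (∀ ℓ, I ℓ) : ℝ)) ^ 2 * (4 * (ord.length : ℝ)) / μ4 ^ 2
        * (skF Q P (skV X lam) - skF Q P (skV X (gsSweep Q X p ord lam))) := by
  obtain ⟨hdec, S, hS0, hS2, hSdir⟩ :=
    sk_key hQ hX hP hp hPm hμpos hbox hmu hL ord lam hlamF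
  have hsweep : gsSweep Q X p ord lam = ord.foldl (fun l' c => gsUpdate Q X p l' c) lam := rfl
  rw [hsweep]
  refine ⟨hdec, ?_⟩
  have hKcpos : (0:ℝ) < (Fintype.card (∀ ℓ, I ℓ) : ℝ) := by
    have hKne : Nonempty (∀ ℓ, I ℓ) := ⟨fun ℓ => Classical.arbitrary _⟩
    exact_mod_cast Fintype.card_pos
  obtain ⟨γ, hγv, hγ1⟩ := hκ (lamM - lam)
  have hr : ∀ k, skV X lamM k - skV X lam k = skV X γ k := by
    intro k
    rw [hγv, sk_vsub]
  have hsc := sk_L1sum (P := P) hQ hmu (skV X lamM) (skV X lam)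
    (fun k => (hbox _ hMbox k).2) (fun k => (hbox _ hlamF k).2)
  have hmid : (∑ k, (P k - Q k * Real.exp (-(skV X lam k))) * (skV X lamM k - skV X lam k))
      = ∑ c : Σ ℓ : Fin n, I ℓ, γ c * skDir Q X P c (skV X lam) := by
    have h1 : ∀ k : ∀ ℓ, I ℓ, (P k - Q k * Real.exp (-(skV X lam k))) * (skV X lamM k - skV X lam k)
        = ∑ c : Σ ℓ : Fin n, I ℓ, γ c * (skD X c k * (P k - Q k * Real.exp (-(skV X lam k)))) := by
      intro k
      rw [hr k, sk_vspan X γ k, Finset.mul_sum]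
      exact Finset.sum_congr rfl fun c _ => by ring
    rw [Finset.sum_congr rfl fun k _ => h1 k, Finset.sum_comm]
    refine Finset.sum_congr rfl fun c _ => ?_
    rw [skDir, Finset.mul_sum]
  rw [hmid] at hsc
  set Kc := (Fintype.card (∀ ℓ, I ℓ) : ℝ) with hKc
  set N := (ord.length : ℝ) with hN
  set w := ‖skV X (lamM - lam)‖ with hw
  set Fl := skF Q P (skV X lam) with hFl
  set Fs := skF Q P (skV X lamM) with hFs
  set Fe := skF Q P (skV X (ord.foldl (fun l' c => gsUpdate Q X p l' c) lam)) with hFe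
  clear_value Fl Fs Fe
  have hsq : w ^ 2 ≤ ∑ k, (skV X lamM k - skV X lam k) ^ 2 := by
    calc w ^ 2 ≤ ∑ k, (skV X (lamM - lam) k) ^ 2 := sk_norm_sq_le _
      _ = ∑ k, (skV X lamM k - skV X lam k) ^ 2 :=
          Finset.sum_congr rfl fun k _ => by rw [sk_vsub]
  have hdirb : ∀ c : Σ ℓ : Fin n, I ℓ, |skDir Q X P c (skV X lam)| ≤ L * Kc * S :=
    fun c => hSdir c (hord₂ c)
  have hLKS : (0:ℝ) ≤ L * Kc * S := mul_nonneg (mul_nonneg hLpos.le hKcpos.le) hS0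
  have hgd : |∑ c : Σ ℓ : Fin n, I ℓ, γ c * skDir Q X P c (skV X lam)|
      ≤ κ * w * (L * Kc * S) := by
    calc |∑ c : Σ ℓ : Fin n, I ℓ, γ c * skDir Q X P c (skV X lam)|
        ≤ ∑ c : Σ ℓ : Fin n, I ℓ, |γ c * skDir Q X P c (skV X lam)| :=
          Finset.abs_sum_le_sum_abs _ _
      _ ≤ ∑ c : Σ ℓ : Fin n, I ℓ, |γ c| * (L * Kc * S) := by
          refine Finset.sum_le_sum fun c _ => ?_
          rw [abs_mul]
          exact mul_le_mul_of_nonneg_left (hdirb c) (abs_nonneg _)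
      _ = (∑ c : Σ ℓ : Fin n, I ℓ, |γ c|) * (L * Kc * S) := by rw [Finset.sum_mul]
      _ ≤ (κ * w) * (L * Kc * S) := mul_le_mul_of_nonneg_right hγ1 hLKS
  have hgap : Fl - Fs ≤ κ * w * (L * Kc * S) - μ4 / 4 * w ^ 2 := by
    have h4 : μ4 / 4 * w ^ 2 ≤ μ4 / 4 * ∑ k, (skV X lamM k - skV X lam k) ^ 2 :=
      mul_le_mul_of_nonneg_left hsq (by positivity)
    have h5 : -(κ * w * (L * Kc * S)) ≤ ∑ c : Σ ℓ : Fin n, I ℓ, γ c * skDir Q X P c (skV X lam) := by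
      have h6 := neg_abs_le (∑ c : Σ ℓ : Fin n, I ℓ, γ c * skDir Q X P c (skV X lam))
      linarith [hgd]
    linarith [hsc]
  have hQuad : (Fl - Fs) * μ4 ≤ (κ * (L * Kc * S)) ^ 2 := by
    nlinarith [hgap, sq_nonneg (2 * (κ * (L * Kc * S)) - μ4 * w), hμpos]
  have hFinal : (Fl - Fs) * μ4 ^ 2 ≤ (κ * L * Kc) ^ 2 * (4 * N) * (Fl - Fe) := by
    have h6 := mul_le_mul_of_nonneg_left hS2 (sq_nonneg (κ * L * Kc))
    nlinarith [hQuad, h6, hμpos]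
  rw [div_mul_eq_mul_div, le_div_iff₀ (by positivity : (0:ℝ) < μ4 ^ 2)]
  nlinarith [hFinal]
end SK5

set_option maxHeartbeats 1000000

/-- Linear convergence of the generalized Sinkhorn algorithm: under
Slater's condition, with `g*` the attained maximum of the dual functional, the dual
values of the iterates produced by cyclic coordinate sweeps (in a fixed order visiting
each coordinate exactly once), from any starting point, converge to `g*` at a linear
rate: `g* − g(λ^{(t)}) ≤ C·ρ^t` for some `C ≥ 0` and `ρ ∈ [0, 1)`. -/
theorem generalized_sinkhorn_linear_convergence
    (n : ℕ) (hn : 1 ≤ n) (I : Fin n → Type)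
    [∀ ℓ, Fintype (I ℓ)] [∀ ℓ, Nonempty (I ℓ)] [∀ ℓ, DecidableEq (I ℓ)]
    (Q : (∀ ℓ, I ℓ) → ℝ) (hQ : ∀ k, 0 < Q k)
    (X : (∀ ℓ, I ℓ) → ℝ) (hX : ∀ k, X k = 1 ∨ X k = -1)
    (p : ∀ ℓ, I ℓ → ℝ) (hp : ∀ ℓ j, 0 < p ℓ j)
    (hslater : ∃ P : (∀ ℓ, I ℓ) → ℝ, (∀ k, 0 < P k) ∧
      ∀ (ℓ : Fin n) (j : I ℓ),
        ∑ k : ∀ ℓ, I ℓ, (if k ℓ = j then X k * P k else 0) = p ℓ j)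
    (gstar : ℝ)
    (hgstar : ∃ lamM : (Σ ℓ : Fin n, I ℓ) → ℝ, dualG Q X p lamM = gstar ∧
      ∀ lam : (Σ ℓ : Fin n, I ℓ) → ℝ, dualG Q X p lam ≤ gstar)
    (ord : List (Σ ℓ : Fin n, I ℓ)) (hord₁ : ord.Nodup) (hord₂ : ∀ c, c ∈ ord)
    (lamseq : ℕ → ((Σ ℓ : Fin n, I ℓ) → ℝ))
    (hstep : ∀ t, lamseq (t + 1) = gsSweep Q X p ord (lamseq t)) :
    ∃ C : ℝ, 0 ≤ C ∧ ∃ ρ : ℝ, 0 ≤ ρ ∧ ρ < 1 ∧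
      ∀ t : ℕ, gstar - dualG Q X p (lamseq t) ≤ C * ρ ^ t := by
  classical
  obtain ⟨P, hP, hPm⟩ := hslater
  obtain ⟨lamM, hlamM, hmax⟩ := hgstar
  have hKne : Nonempty (∀ ℓ, I ℓ) := ⟨fun ℓ => Classical.arbitrary _⟩
  have hne : (Finset.univ : Finset (∀ ℓ, I ℓ)).Nonempty := Finset.univ_nonempty
  have hdual : ∀ lam, dualG Q X p lam = -skF Q P (skV X lam) := fun lam => sk_hdual hPm lam
  have hFmin : ∀ lam, skF Q P (skV X lamM) ≤ skF Q P (skV X lam) := by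
    intro lam
    have h1 := hmax lam
    rw [← hlamM, hdual lam, hdual lamM] at h1
    linarith
  obtain ⟨m, M, hbox⟩ := sk_box hQ hP (skF Q P (skV X (lamseq 0)))
  set μ4 := Finset.univ.inf' hne (fun k => Q k * Real.exp (-M)) with hμ4
  have hμpos : 0 < μ4 := by
    rw [hμ4, Finset.lt_inf'_iff]
    exact fun k _ => mul_pos (hQ k) (Real.exp_pos _)
  have hmu : ∀ k, μ4 ≤ Q k * Real.exp (-M) := by
    intro k; rw [hμ4]; exact Finset.inf'_le _ (Finset.mem_univ k)
  set L := Finset.univ.sup' hne (fun k => Q k * Real.exp (-m)) with hLdef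
  have hL : ∀ k, Q k * Real.exp (-m) ≤ L := by
    intro k; rw [hLdef]; exact Finset.le_sup' (fun k => Q k * Real.exp (-m)) (Finset.mem_univ k)
  have hLpos : 0 < L := lt_of_lt_of_le
    (mul_pos (hQ (Classical.arbitrary _)) (Real.exp_pos _)) (hL _)
  obtain ⟨κ, hκ0, hκ⟩ := sk_kappa (n := n) (I := I) X
  have hMbox : skF Q P (skV X lamM) ≤ skF Q P (skV X (lamseq 0)) := hFmin (lamseq 0)
  set cBig := (κ * L * (Fintype.card (∀ ℓ, I ℓ) : ℝ)) ^ 2 * (4 * (ord.length : ℝ)) / μ4 ^ 2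
    with hcBig
  have hcBig0 : 0 ≤ cBig := by
    rw [hcBig]
    positivity
  set c' := max cBig 1 with hc'
  have hc1 : 1 ≤ c' := le_max_right _ _
  have hc0 : 0 < c' := lt_of_lt_of_le one_pos hc1
  set ρ := 1 - 1 / c' with hρ
  have hρ0 : 0 ≤ ρ := by
    have h2 : 1 / c' ≤ 1 := by rw [div_le_one hc0]; exact hc1
    rw [hρ]; linarith
  have hρ1 : ρ < 1 := by
    have h2 : 0 < 1 / c' := by positivity
    rw [hρ]; linarith
  have hinv : ∀ t, skF Q P (skV X (lamseq t)) ≤ skF Q P (skV X (lamseq 0)) ∧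
      skF Q P (skV X (lamseq t)) - skF Q P (skV X lamM)
        ≤ (skF Q P (skV X (lamseq 0)) - skF Q P (skV X lamM)) * ρ ^ t := by
    intro t
    induction t with
    | zero => exact ⟨le_rfl, by simp⟩
    | succ t ih =>
      obtain ⟨hbt, hgt⟩ := ih
      have hco := sk_contract hQ hX hP hp hPm hμpos hLpos hbox hmu hL hκ0 hκ lamM hMbox
        ord hord₂ (lamseq t) hbt
      have hstep' : lamseq (t + 1) = gsSweep Q X p ord (lamseq t) := hstep t
      rw [hstep']
      set Fl := skF Q P (skV X (lamseq t)) with hFl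
      set Fe := skF Q P (skV X (gsSweep Q X p ord (lamseq t))) with hFe
      set Fs := skF Q P (skV X lamM) with hFs
      set F0 := skF Q P (skV X (lamseq 0)) with hF0v
      clear_value Fl Fe Fs F0
      obtain ⟨hco1, hco2⟩ := hco
      have hD0 : 0 ≤ Fl - Fe := by linarith
      have hg0 : 0 ≤ Fl - Fs := by linarith [hFmin (lamseq t)]
      constructor
      · linarith
      · have h1 : Fl - Fs ≤ c' * (Fl - Fe) := by
          have h2 : cBig * (Fl - Fe) ≤ c' * (Fl - Fe) :=
            mul_le_mul_of_nonneg_right (le_max_left _ _) hD0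
          have h3 : Fl - Fs ≤ cBig * (Fl - Fe) := by
            rw [hcBig]; exact hco2
          linarith
        have h3 : (Fl - Fs) / c' ≤ Fl - Fe := by
          rw [div_le_iff₀ hc0]
          nlinarith [h1]
        have h2 : Fe - Fs ≤ ρ * (Fl - Fs) := by
          rw [hρ]
          have h4 : (1 - 1 / c') * (Fl - Fs) = (Fl - Fs) - (Fl - Fs) / c' := by
            field_simp
          rw [h4]
          linarith
        have h5 : ρ * (Fl - Fs) ≤ ρ * ((F0 - Fs) * ρ ^ t) :=
          mul_le_mul_of_nonneg_left hgt hρ0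
        calc Fe - Fs ≤ ρ * (Fl - Fs) := h2
          _ ≤ ρ * ((F0 - Fs) * ρ ^ t) := h5
          _ = (F0 - Fs) * ρ ^ (t + 1) := by ring
  refine ⟨gstar - dualG Q X p (lamseq 0), by linarith [hmax (lamseq 0)], ρ, hρ0, hρ1, fun t => ?_⟩
  have e1 : gstar - dualG Q X p (lamseq t)
      = skF Q P (skV X (lamseq t)) - skF Q P (skV X lamM) := by
    rw [← hlamM, hdual (lamseq t), hdual lamM]; ring
  have e0 : gstar - dualG Q X p (lamseq 0)
      = skF Q P (skV X (lamseq 0)) - skF Q P (skV X lamM) := by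
    rw [← hlamM, hdual (lamseq 0), hdual lamM]; ring
  rw [e1, e0]
  exact (hinv t).2

end
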